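/- In a run of the abstract learning algorithm, the state-selector subobjects are monotonically non-decreasing and the test-quotients monotonically non-increasing: for all n, α_n^◁ ≤ α_{n+1}^◁ and β_{n+1}^▷ ≤ β_n^▷; moreover strict progress holds: if α_{n+1}^◁ ≤ α_n^◁ then α_{n+1} = α_n, and if β_n^▷ ≤ β_{n+1}^▷ then β_{n+1} = β_n. Consequently, if Q_t has only finitely many isomorphism classes of subobjects and of quotients, every run stabilizes: there exists n with W_{n+1} = W_n. -/

import Mathlib

open CategoryTheory Limits

universe v u

/-- The functor `F_I = I + F(-)`. -/
noncomputable def FIfun {C : Type u} [Category.{v} C] [HasBinaryCoproducts C]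
    (F : C ⥤ C) (I : C) : C ⥤ C where
  obj X := I ⨿ F.obj X
  map f := coprod.map (𝟙 I) (F.map f)

/-- An `(E, M)`-factorisation system with a chosen factorisation of every morphism. -/
structure FactSys (C : Type u) [Category.{v} C] where
  E : MorphismProperty C
  M : MorphismProperty C
  hE : ∀ {X Y : C} (f : X ⟶ Y), E f → Epi f
  hM : ∀ {X Y : C} (f : X ⟶ Y), M f → Mono f
  Im : ∀ {X Y : C}, (X ⟶ Y) → C
  ep : ∀ {X Y : C} (f : X ⟶ Y), X ⟶ Im f
  mo : ∀ {X Y : C} (f : X ⟶ Y), Im f ⟶ Y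
  hep : ∀ {X Y : C} (f : X ⟶ Y), E (ep f)
  hmo : ∀ {X Y : C} (f : X ⟶ Y), M (mo f)
  hfac : ∀ {X Y : C} (f : X ⟶ Y), ep f ≫ mo f = f
  fill : ∀ {X Y Z W : C} (e : X ⟶ Y) (m : Z ⟶ W) (f : X ⟶ Z) (g : Y ⟶ W),
    E e → M m → f ≫ m = e ≫ g → ∃! d : Y ⟶ Z, e ≫ d = f ∧ d ≫ m = g

/-- All the data of the abstract learning situation. -/
structure LearnCtx (C : Type u) [Category.{v} C] [HasBinaryCoproducts C] where
  FS : FactSys C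
  F : C ⥤ C
  I : C
  O : C
  hFE : ∀ {X Y : C} (f : X ⟶ Y), FS.E f → FS.E (F.map f)
  Qt : C
  δt : F.obj Qt ⟶ Qt
  it : I ⟶ Qt
  ot : Qt ⟶ O

/-- A wrapper for the target state space `Q_t`. -/
structure Wrapper {C : Type u} [Category.{v} C] (Qt : C) where
  S : C
  P : C
  α : S ⟶ Qt
  β : Qt ⟶ P

namespace LearnCtx

variable {C : Type u} [Category.{v} C] [HasBinaryCoproducts C] (L : LearnCtx C)

noncomputable def FI : C ⥤ C := FIfun L.F L.I

/-- `τ_W = β ∘ α`. -/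
def tau (W : Wrapper L.Qt) : W.S ⟶ W.P := W.α ≫ W.β

/-- Hypothesis state space `H_W`. -/
def H (W : Wrapper L.Qt) : C := L.FS.Im (L.tau W)

/-- `τ_W^▷`. -/
def tr (W : Wrapper L.Qt) : W.S ⟶ L.H W := L.FS.ep (L.tau W)

/-- `τ_W^◁`. -/
def tl (W : Wrapper L.Qt) : L.H W ⟶ W.P := L.FS.mo (L.tau W)

def Closed (W : Wrapper L.Qt) : Prop :=
  (∃ iW : L.I ⟶ L.H W, iW ≫ L.tl W = L.it ≫ W.β) ∧
  (∃ cl : L.F.obj W.S ⟶ L.H W, cl ≫ L.tl W = L.F.map W.α ≫ L.δt ≫ W.β)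

def Consistent (W : Wrapper L.Qt) : Prop :=
  (∃ oW : L.H W ⟶ L.O, L.tr W ≫ oW = W.α ≫ L.ot) ∧
  (∃ cs : L.F.obj (L.H W) ⟶ W.P, L.F.map (L.tr W) ≫ cs = L.F.map W.α ≫ L.δt ≫ W.β)

/-- The subobject order on morphisms into `Q_t`, via the `M`-parts of their factorisations. -/
def subLE {X Y : C} (f : X ⟶ L.Qt) (g : Y ⟶ L.Qt) : Prop :=
  ∃ u : L.FS.Im f ⟶ L.FS.Im g, u ≫ L.FS.mo g = L.FS.mo f

/-- The quotient order on morphisms out of `Q_t`: `f^▷ ≤ g^▷` iff `g^▷` factors through `f^▷`. -/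
def quotLE {X Y : C} (f : L.Qt ⟶ X) (g : L.Qt ⟶ Y) : Prop :=
  ∃ u : L.FS.Im f ⟶ L.FS.Im g, L.FS.ep f ≫ u = L.FS.ep g

/-- Local closedness of `W` with respect to `α' : S' ⟶ Q_t`. -/
def LocClosed (W : Wrapper L.Qt) {S' : C} (α' : S' ⟶ L.Qt) : Prop :=
  L.subLE α' W.α ∧
  (∃ iW : L.I ⟶ L.H W, iW ≫ L.tl W = L.it ≫ W.β) ∧
  (∃ lc : L.F.obj S' ⟶ L.H W, lc ≫ L.tl W = L.F.map α' ≫ L.δt ≫ W.β)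

/-- Local consistency of `W` with respect to `β' : Q_t ⟶ P'`. -/
def LocConsistent (W : Wrapper L.Qt) {P' : C} (β' : L.Qt ⟶ P') : Prop :=
  L.quotLE W.β β' ∧
  (∃ oW : L.H W ⟶ L.O, L.tr W ≫ oW = W.α ≫ L.ot) ∧
  (∃ lc : L.F.obj (L.H W) ⟶ P', L.F.map (L.tr W) ≫ lc = L.F.map W.α ≫ L.δt ≫ β')

/-- Recursiveness of an `F_I`-coalgebra. -/
def Recursive {S : C} (ρ : S ⟶ L.FI.obj S) : Prop :=
  ∀ (X : C) (x : L.FI.obj X ⟶ X), ∃! f : S ⟶ X, f = ρ ≫ L.FI.map f ≫ x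

/-- `W` is correct up to `ρ`: the `ρ`-restricted language of any hypothesis automaton of `W`
agrees with the `ρ`-restricted language of the target. -/
def CorrectUpTo (W : Wrapper L.Qt) {S' : C} (ρ : S' ⟶ L.FI.obj S') : Prop :=
  ∀ (iW : L.I ⟶ L.H W) (δW : L.F.obj (L.H W) ⟶ L.H W) (oW : L.H W ⟶ L.O),
    iW ≫ L.tl W = L.it ≫ W.β →
    (L.F.map (L.tr W) ≫ δW) ≫ L.tl W = L.F.map W.α ≫ L.δt ≫ W.β →
    L.tr W ≫ oW = W.α ≫ L.ot →
    ∀ (f : S' ⟶ L.H W) (g : S' ⟶ L.Qt),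
      f = ρ ≫ L.FI.map f ≫ coprod.desc iW δW →
      g = ρ ≫ L.FI.map g ≫ coprod.desc L.it L.δt →
      f ≫ oW = g ≫ L.ot

/-- The `α`-component of a wrapper, as an element of a sigma type, so that equality of
`α`-components of wrappers with different state objects can be expressed. -/
def αPart (W : Wrapper L.Qt) : Σ S : C, S ⟶ L.Qt := ⟨W.S, W.α⟩

/-- The `β`-component of a wrapper. -/
def βPart (W : Wrapper L.Qt) : Σ P : C, L.Qt ⟶ P := ⟨W.P, W.β⟩

/-- A run of the abstract learning algorithm. -/
def IsRun (W : ℕ → Wrapper L.Qt) : Prop :=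
  (Nonempty (IsInitial (W 0).S) ∧ Nonempty (IsTerminal (W 0).P)) ∧
  ∀ n : ℕ,
    (¬ L.Closed (W n) →
      L.βPart (W (n + 1)) = L.βPart (W n) ∧ L.LocClosed (W (n + 1)) (W n).α) ∧
    (L.Closed (W n) → ¬ L.Consistent (W n) →
      L.αPart (W (n + 1)) = L.αPart (W n) ∧ L.LocConsistent (W (n + 1)) (W n).β) ∧
    (L.Closed (W n) → L.Consistent (W n) →
      ¬ (∀ (S' : C) (ρ : S' ⟶ L.FI.obj S'), L.Recursive ρ → L.CorrectUpTo (W n) ρ) →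
      L.βPart (W (n + 1)) = L.βPart (W n) ∧
      ∃ (S' : C) (ρ : S' ⟶ L.FI.obj S'), L.Recursive ρ ∧ ¬ L.CorrectUpTo (W n) ρ ∧
        ∃ f : S' ⟶ L.Qt,
          f = ρ ≫ L.FI.map f ≫ coprod.desc L.it L.δt ∧
          L.subLE (W (n + 1)).α (coprod.desc (W n).α f) ∧
          L.subLE (coprod.desc (W n).α f) ((W (n + 1)).α)) ∧
    (L.Closed (W n) → L.Consistent (W n) →
      (∀ (S' : C) (ρ : S' ⟶ L.FI.obj S'), L.Recursive ρ → L.CorrectUpTo (W n) ρ) →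
      W (n + 1) = W n)

end LearnCtx

namespace LearnCtx

variable {C : Type u} [Category.{v} C] [HasBinaryCoproducts C] (L : LearnCtx C)

lemma FI_map' {X Y : C} (f : X ⟶ Y) :
    L.FI.map f = coprod.map (𝟙 L.I) (L.F.map f) := rfl

lemma subLE_refl' {X : C} (f : X ⟶ L.Qt) : L.subLE f f :=
  ⟨𝟙 _, Category.id_comp _⟩

lemma subLE_trans' {X Y Z : C} {f : X ⟶ L.Qt} {g : Y ⟶ L.Qt} {h : Z ⟶ L.Qt}
    (h1 : L.subLE f g) (h2 : L.subLE g h) : L.subLE f h := by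
  obtain ⟨u, hu⟩ := h1; obtain ⟨v, hv⟩ := h2
  exact ⟨u ≫ v, by rw [Category.assoc, hv, hu]⟩

lemma quotLE_refl' {X : C} (f : L.Qt ⟶ X) : L.quotLE f f :=
  ⟨𝟙 _, Category.comp_id _⟩

lemma quotLE_trans' {X Y Z : C} {f : L.Qt ⟶ X} {g : L.Qt ⟶ Y} {h : L.Qt ⟶ Z}
    (h1 : L.quotLE f g) (h2 : L.quotLE g h) : L.quotLE f h := by
  obtain ⟨u, hu⟩ := h1; obtain ⟨v, hv⟩ := h2
  exact ⟨u ≫ v, by rw [← Category.assoc, hu, hv]⟩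

/-- If `mo f ≤ mo g` as subobjects, then `f ≤ g`. -/
lemma subLE_of_mo {X Y : C} {f : X ⟶ L.Qt} {g : Y ⟶ L.Qt}
    (h : L.subLE (L.FS.mo f) (L.FS.mo g)) : L.subLE f g := by
  obtain ⟨u', hu'⟩ := h
  obtain ⟨d, ⟨hd1, hd2⟩, -⟩ := L.FS.fill (L.FS.ep (L.FS.mo g)) (L.FS.mo g)
    (𝟙 (L.FS.Im g)) (L.FS.mo (L.FS.mo g)) (L.FS.hep _) (L.FS.hmo _)
    (by rw [Category.id_comp, L.FS.hfac])
  refine ⟨L.FS.ep (L.FS.mo f) ≫ u' ≫ d, ?_⟩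
  rw [Category.assoc, Category.assoc, hd2, hu', L.FS.hfac]

/-- If `ep f ≤ ep g` as quotients, then `f ≤ g`. -/
lemma quotLE_of_ep {X Y : C} {f : L.Qt ⟶ X} {g : L.Qt ⟶ Y}
    (h : L.quotLE (L.FS.ep f) (L.FS.ep g)) : L.quotLE f g := by
  obtain ⟨u', hu'⟩ := h
  obtain ⟨c, ⟨hc1, hc2⟩, -⟩ := L.FS.fill (L.FS.ep f) (L.FS.mo (L.FS.ep f))
    (L.FS.ep (L.FS.ep f)) (𝟙 (L.FS.Im f)) (L.FS.hep _) (L.FS.hmo _)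
    (by rw [Category.comp_id, L.FS.hfac])
  refine ⟨c ≫ u' ≫ L.FS.mo (L.FS.ep g), ?_⟩
  rw [← Category.assoc, hc1, ← Category.assoc, hu', L.FS.hfac]

lemma subLE_inl_desc {X Y : C} (f : X ⟶ L.Qt) (g : Y ⟶ L.Qt) :
    L.subLE f (coprod.desc f g) := by
  obtain ⟨u, ⟨hu1, hu2⟩, -⟩ := L.FS.fill (L.FS.ep f) (L.FS.mo (coprod.desc f g))
    (coprod.inl ≫ L.FS.ep (coprod.desc f g)) (L.FS.mo f) (L.FS.hep _) (L.FS.hmo _)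
    (by rw [Category.assoc, L.FS.hfac, coprod.inl_desc, L.FS.hfac])
  exact ⟨u, hu2⟩

/-- Image map on the `mo` side: `α' ≤ α` induces a map `Im (α' ≫ β) ⟶ Im (α ≫ β)`
compatible with the `mo` parts. -/
lemma imMap_sub {S S' P : C} (α : S ⟶ L.Qt) (α' : S' ⟶ L.Qt) (β : L.Qt ⟶ P)
    (h : L.subLE α' α) :
    ∃ v : L.FS.Im (α' ≫ β) ⟶ L.FS.Im (α ≫ β),
      v ≫ L.FS.mo (α ≫ β) = L.FS.mo (α' ≫ β) := by
  obtain ⟨u, hu⟩ := h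
  obtain ⟨d, ⟨hd1, hd2⟩, -⟩ := L.FS.fill (L.FS.ep α) (L.FS.mo (α ≫ β))
    (L.FS.ep (α ≫ β)) (L.FS.mo α ≫ β) (L.FS.hep _) (L.FS.hmo _)
    (by rw [L.FS.hfac, ← Category.assoc, L.FS.hfac])
  obtain ⟨v, ⟨hv1, hv2⟩, -⟩ := L.FS.fill (L.FS.ep (α' ≫ β)) (L.FS.mo (α ≫ β))
    (L.FS.ep α' ≫ u ≫ d) (L.FS.mo (α' ≫ β)) (L.FS.hep _) (L.FS.hmo _)
    (by rw [Category.assoc, Category.assoc, hd2, ← Category.assoc u, hu,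
        ← Category.assoc, L.FS.hfac, L.FS.hfac])
  exact ⟨v, hv2⟩

/-- Image map on the `ep` side: `β ≤ β'` as quotients induces a map
`Im (α ≫ β) ⟶ Im (α ≫ β')` compatible with the `ep` parts. -/
lemma imMap_quot {S P P' : C} (α : S ⟶ L.Qt) (β : L.Qt ⟶ P) (β' : L.Qt ⟶ P')
    (h : L.quotLE β β') :
    ∃ w : L.FS.Im (α ≫ β) ⟶ L.FS.Im (α ≫ β'),
      L.FS.ep (α ≫ β) ≫ w = L.FS.ep (α ≫ β') := by
  obtain ⟨u, hu⟩ := h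
  obtain ⟨d, ⟨hd1, hd2⟩, -⟩ := L.FS.fill (L.FS.ep (α ≫ β)) (L.FS.mo β)
    (α ≫ L.FS.ep β) (L.FS.mo (α ≫ β)) (L.FS.hep _) (L.FS.hmo _)
    (by rw [Category.assoc, L.FS.hfac, L.FS.hfac])
  obtain ⟨w, ⟨hw1, hw2⟩, -⟩ := L.FS.fill (L.FS.ep (α ≫ β)) (L.FS.mo (α ≫ β'))
    (L.FS.ep (α ≫ β')) (d ≫ u ≫ L.FS.mo β') (L.FS.hep _) (L.FS.hmo _)
    (by
      calc L.FS.ep (α ≫ β') ≫ L.FS.mo (α ≫ β') = α ≫ β' := L.FS.hfac _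
        _ = α ≫ L.FS.ep β' ≫ L.FS.mo β' := by rw [L.FS.hfac]
        _ = α ≫ (L.FS.ep β ≫ u) ≫ L.FS.mo β' := by rw [hu]
        _ = (α ≫ L.FS.ep β) ≫ u ≫ L.FS.mo β' := by
            rw [Category.assoc, Category.assoc]
        _ = (L.FS.ep (α ≫ β) ≫ d) ≫ u ≫ L.FS.mo β' := by rw [hd1]
        _ = L.FS.ep (α ≫ β) ≫ d ≫ u ≫ L.FS.mo β' := by rw [Category.assoc])
  exact ⟨w, hw1⟩

lemma wrapper_eq (V' V : Wrapper L.Qt)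
    (hα : L.αPart V' = L.αPart V) (hβ : L.βPart V' = L.βPart V) : V' = V := by
  obtain ⟨S', P', α', β'⟩ := V'
  obtain ⟨S, P, α, β⟩ := V
  obtain ⟨h1, h2⟩ := Sigma.ext_iff.mp hα
  obtain ⟨h3, h4⟩ := Sigma.ext_iff.mp hβ
  dsimp only [αPart, βPart] at h1 h2 h3 h4
  subst h1; subst h3
  obtain rfl := eq_of_heq h2
  obtain rfl := eq_of_heq h4
  rfl

lemma subLE_of_αEq (V' V : Wrapper L.Qt) (hα : L.αPart V' = L.αPart V) :
    L.subLE V.α V'.α := by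
  obtain ⟨S', P', α', β'⟩ := V'
  obtain ⟨S, P, α, β⟩ := V
  obtain ⟨h1, h2⟩ := Sigma.ext_iff.mp hα
  dsimp only [αPart] at h1 h2
  subst h1
  obtain rfl := eq_of_heq h2
  exact L.subLE_refl' _

lemma quotLE_of_βEq (V' V : Wrapper L.Qt) (hβ : L.βPart V' = L.βPart V) :
    L.quotLE V'.β V.β := by
  obtain ⟨S', P', α', β'⟩ := V'
  obtain ⟨S, P, α, β⟩ := V
  obtain ⟨h1, h2⟩ := Sigma.ext_iff.mp hβ
  dsimp only [βPart] at h1 h2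
  subst h1
  obtain rfl := eq_of_heq h2
  exact L.quotLE_refl' _

/-- Transfer of local closedness along `α' ≤ α` (same `β`): the old wrapper is closed. -/
lemma closed_of (V V' : Wrapper L.Qt) (hβ : L.βPart V' = L.βPart V)
    (hsub : L.subLE V'.α V.α)
    (h1 : ∃ iW : L.I ⟶ L.H V', iW ≫ L.tl V' = L.it ≫ V'.β)
    (h2 : ∃ lc : L.F.obj V.S ⟶ L.H V', lc ≫ L.tl V' = L.F.map V.α ≫ L.δt ≫ V'.β) :
    L.Closed V := by
  obtain ⟨S', P', α', β'⟩ := V'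
  obtain ⟨S, P, α, β⟩ := V
  obtain ⟨hp1, hp2⟩ := Sigma.ext_iff.mp hβ
  dsimp only [βPart] at hp1 hp2
  subst hp1
  obtain rfl := eq_of_heq hp2
  simp only [H, tl, tau] at h1 h2
  obtain ⟨v, hv⟩ := L.imMap_sub α α' β' hsub
  obtain ⟨iW, hiW⟩ := h1
  obtain ⟨lc, hlc⟩ := h2
  simp only [Closed, H, tl, tau]
  refine ⟨⟨iW ≫ v, ?_⟩, ⟨lc ≫ v, ?_⟩⟩
  · rw [Category.assoc, hv, hiW]
  · rw [Category.assoc, hv, hlc]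

/-- Transfer of local consistency along `β ≤ β'` (same `α`): the old wrapper is consistent. -/
lemma consistent_of (V V' : Wrapper L.Qt) (hα : L.αPart V' = L.αPart V)
    (hq : L.quotLE V.β V'.β)
    (h1 : ∃ oW : L.H V' ⟶ L.O, L.tr V' ≫ oW = V'.α ≫ L.ot)
    (h2 : ∃ lc : L.F.obj (L.H V') ⟶ V.P,
      L.F.map (L.tr V') ≫ lc = L.F.map V'.α ≫ L.δt ≫ V.β) :
    L.Consistent V := by
  obtain ⟨S', P', α', β'⟩ := V'
  obtain ⟨S, P, α, β⟩ := V
  obtain ⟨hp1, hp2⟩ := Sigma.ext_iff.mp hα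
  dsimp only [αPart] at hp1 hp2
  subst hp1
  obtain rfl := eq_of_heq hp2
  simp only [H, tr, tau] at h1 h2
  obtain ⟨w, hw⟩ := L.imMap_quot α' β β' hq
  obtain ⟨oW, hoW⟩ := h1
  obtain ⟨lc, hlc⟩ := h2
  simp only [Consistent, H, tr, tau]
  refine ⟨⟨w ≫ oW, ?_⟩, ⟨L.F.map w ≫ lc, ?_⟩⟩
  · rw [← Category.assoc, hw, hoW]
  · rw [← Category.assoc, ← L.F.map_comp, hw, hlc]

lemma FI_desc_eq {X Y Z T : C} (g : X ⟶ Y) (a : L.I ⟶ Z) (b : L.F.obj Y ⟶ Z) (k : Z ⟶ T) :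
    L.FI.map g ≫ coprod.desc a b ≫ k = coprod.desc (a ≫ k) (L.F.map g ≫ b ≫ k) := by
  show (coprod.map (𝟙 L.I) (L.F.map g) : L.I ⨿ L.F.obj X ⟶ L.I ⨿ L.F.obj Y) ≫
    coprod.desc a b ≫ k = _
  simp

/-- If the counterexample is already subsumed by the current subobject, the wrapper is
correct up to the corresponding recursive coalgebra. -/
lemma correct_of_sub (V : Wrapper L.Qt) {S' : C} (ρ : S' ⟶ L.FI.obj S')
    (hρ : L.Recursive ρ) (f : S' ⟶ L.Qt)
    (hf : f = ρ ≫ L.FI.map f ≫ coprod.desc L.it L.δt)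
    (hsub : L.subLE (coprod.desc V.α f) V.α) : L.CorrectUpTo V ρ := by
  intro iW δW oW hiW hδW hoW h g hh hg
  obtain ⟨z, hz, hzu⟩ := hρ L.Qt (coprod.desc L.it L.δt)
  have hgf : g = f := (hzu g hg).trans (hzu f hf).symm
  obtain ⟨u, hu⟩ := hsub
  set φ : S' ⟶ L.FS.Im V.α := coprod.inr ≫ L.FS.ep (coprod.desc V.α f) ≫ u with hφ
  have hfφ : f = φ ≫ L.FS.mo V.α := by
    rw [hφ, Category.assoc, Category.assoc, hu, L.FS.hfac, coprod.inr_desc]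
  simp only [tl, tr, H, tau] at hiW hδW hoW hh ⊢
  change L.I ⟶ L.FS.Im (V.α ≫ V.β) at iW
  change L.F.obj (L.FS.Im (V.α ≫ V.β)) ⟶ L.FS.Im (V.α ≫ V.β) at δW
  change L.FS.Im (V.α ≫ V.β) ⟶ L.O at oW
  change S' ⟶ L.FS.Im (V.α ≫ V.β) at h
  obtain ⟨q, ⟨hq1, hq2⟩, -⟩ := L.FS.fill (L.FS.ep V.α) (L.FS.mo (V.α ≫ V.β))
    (L.FS.ep (V.α ≫ V.β)) (L.FS.mo V.α ≫ V.β) (L.FS.hep _) (L.FS.hmo _)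
    (by rw [L.FS.hfac, ← Category.assoc, L.FS.hfac])
  have hepi : Epi (L.F.map (L.FS.ep V.α)) := L.FS.hE _ (L.hFE _ (L.FS.hep _))
  have hkey : L.F.map q ≫ δW ≫ L.FS.mo (V.α ≫ V.β) =
      L.F.map (L.FS.mo V.α) ≫ L.δt ≫ V.β := by
    refine (cancel_epi (L.F.map (L.FS.ep V.α))).mp ?_
    calc L.F.map (L.FS.ep V.α) ≫ L.F.map q ≫ δW ≫ L.FS.mo (V.α ≫ V.β)
        = L.F.map (L.FS.ep V.α ≫ q) ≫ δW ≫ L.FS.mo (V.α ≫ V.β) := by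
          rw [L.F.map_comp, Category.assoc]
      _ = (L.F.map (L.FS.ep (V.α ≫ V.β)) ≫ δW) ≫ L.FS.mo (V.α ≫ V.β) := by
          rw [hq1, Category.assoc]
      _ = L.F.map V.α ≫ L.δt ≫ V.β := hδW
      _ = L.F.map (L.FS.ep V.α ≫ L.FS.mo V.α) ≫ L.δt ≫ V.β := by rw [L.FS.hfac]
      _ = L.F.map (L.FS.ep V.α) ≫ L.F.map (L.FS.mo V.α) ≫ L.δt ≫ V.β := by
          rw [L.F.map_comp, Category.assoc]
  have hmono : Mono (L.FS.mo (V.α ≫ V.β)) := L.FS.hM _ (L.FS.hmo _)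
  have e1 : f ≫ V.β = ρ ≫ coprod.desc (L.it ≫ V.β) (L.F.map f ≫ L.δt ≫ V.β) := by
    conv_lhs => rw [hf]
    exact (Category.assoc _ _ _).trans (congrArg (fun k => ρ ≫ k)
      ((Category.assoc _ _ _).trans (L.FI_desc_eq f L.it L.δt V.β)))
  have e2 : L.FI.map (φ ≫ q) ≫ coprod.desc iW δW ≫ L.FS.mo (V.α ≫ V.β)
      = coprod.desc (L.it ≫ V.β) (L.F.map f ≫ L.δt ≫ V.β) := by
    rw [L.FI_desc_eq, hiW]
    congr 1
    rw [L.F.map_comp]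
    simp only [Category.assoc]
    rw [hkey, ← Functor.map_comp_assoc, ← hfφ]
  have hφq : φ ≫ q = ρ ≫ L.FI.map (φ ≫ q) ≫ coprod.desc iW δW := by
    rw [← cancel_mono (L.FS.mo (V.α ≫ V.β))]
    calc (φ ≫ q) ≫ L.FS.mo (V.α ≫ V.β) = f ≫ V.β := by
          rw [Category.assoc, hq2, ← Category.assoc, ← hfφ]
      _ = ρ ≫ coprod.desc (L.it ≫ V.β) (L.F.map f ≫ L.δt ≫ V.β) := e1
      _ = (ρ ≫ L.FI.map (φ ≫ q) ≫ coprod.desc iW δW) ≫ L.FS.mo (V.α ≫ V.β) := by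
          exact ((congrArg (fun k => ρ ≫ k) e2).symm.trans
            (congrArg (fun k => ρ ≫ k) (Category.assoc _ _ _).symm)).trans
            (Category.assoc _ _ _).symm
  obtain ⟨z', hz', hz'u⟩ := hρ (L.FS.Im (V.α ≫ V.β)) (coprod.desc iW δW)
  have hhz : h = φ ≫ q := (hz'u h hh).trans (hz'u (φ ≫ q) hφq).symm
  have hepi2 : Epi (L.FS.ep V.α) := L.FS.hE _ (L.FS.hep _)
  have hqo : q ≫ oW = L.FS.mo V.α ≫ L.ot := by
    refine (cancel_epi (L.FS.ep V.α)).mp ?_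
    calc L.FS.ep V.α ≫ q ≫ oW = (L.FS.ep V.α ≫ q) ≫ oW := by rw [Category.assoc]
      _ = L.FS.ep (V.α ≫ V.β) ≫ oW := by rw [hq1]
      _ = V.α ≫ L.ot := hoW
      _ = (L.FS.ep V.α ≫ L.FS.mo V.α) ≫ L.ot := by rw [L.FS.hfac]
      _ = L.FS.ep V.α ≫ L.FS.mo V.α ≫ L.ot := by rw [Category.assoc]
  rw [hhz, hgf, hfφ, Category.assoc, hqo, Category.assoc]
  simp only [hφ, Category.assoc]

end LearnCtx

/-- In any run of the abstract learning algorithm the state-selector subobjects are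
non-decreasing and the test quotients non-increasing, with strict progress:
`α_n^◁ ≤ α_{n+1}^◁`, `β_{n+1}^▷ ≤ β_n^▷`, and if `α_{n+1}^◁ ≤ α_n^◁` then `α_{n+1} = α_n`,
if `β_n^▷ ≤ β_{n+1}^▷` then `β_{n+1} = β_n`.  Consequently, if `Q_t` has only finitely many
isomorphism classes of `M`-subobjects and of `E`-quotients, then every run stabilises. -/
theorem stmt17 {C : Type u} [Category.{v} C] [HasBinaryCoproducts C]
    (L : LearnCtx C) (W : ℕ → Wrapper L.Qt) (hrun : L.IsRun W) :
    (∀ n : ℕ,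
      L.subLE (W n).α (W (n + 1)).α ∧
      L.quotLE (W (n + 1)).β (W n).β ∧
      (L.subLE (W (n + 1)).α (W n).α → L.αPart (W (n + 1)) = L.αPart (W n)) ∧
      (L.quotLE (W n).β (W (n + 1)).β → L.βPart (W (n + 1)) = L.βPart (W n))) ∧
    ((∃ (k : ℕ) (rep : Fin k → Σ X : C, X ⟶ L.Qt),
        ∀ (X : C) (f : X ⟶ L.Qt), L.FS.M f →
          ∃ i : Fin k, L.subLE f (rep i).2 ∧ L.subLE (rep i).2 f) →
      (∃ (k : ℕ) (rep : Fin k → Σ X : C, L.Qt ⟶ X),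
        ∀ (X : C) (f : L.Qt ⟶ X), L.FS.E f →
          ∃ i : Fin k, L.quotLE f (rep i).2 ∧ L.quotLE (rep i).2 f) →
      ∃ n : ℕ, W (n + 1) = W n) := by
  have main : ∀ n : ℕ,
      L.subLE (W n).α (W (n + 1)).α ∧
      L.quotLE (W (n + 1)).β (W n).β ∧
      (L.subLE (W (n + 1)).α (W n).α → L.αPart (W (n + 1)) = L.αPart (W n)) ∧
      (L.quotLE (W n).β (W (n + 1)).β → L.βPart (W (n + 1)) = L.βPart (W n)) := by
    intro n
    obtain ⟨hA, hB, hC, hD⟩ := hrun.2 n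
    by_cases hc : L.Closed (W n)
    · by_cases hs : L.Consistent (W n)
      · by_cases hcor : ∀ (S' : C) (ρ : S' ⟶ L.FI.obj S'),
            L.Recursive ρ → L.CorrectUpTo (W n) ρ
        · have he := hD hc hs hcor
          exact ⟨by rw [he]; exact L.subLE_refl' _, by rw [he]; exact L.quotLE_refl' _,
            fun _ => by rw [he], fun _ => by rw [he]⟩
        · obtain ⟨hβ, S', ρ, hρ, hncor, f, hf, h1, h2⟩ := hC hc hs hcor
          refine ⟨L.subLE_trans' (L.subLE_inl_desc _ _) h2, L.quotLE_of_βEq _ _ hβ,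
            fun hle => ?_, fun _ => hβ⟩
          exact absurd
            (L.correct_of_sub (W n) ρ hρ f hf (L.subLE_trans' h2 hle)) hncor
      · obtain ⟨hα, hq, hoW, hlc⟩ := hB hc hs
        refine ⟨L.subLE_of_αEq _ _ hα, hq, fun _ => hα, fun hle => ?_⟩
        exact absurd (L.consistent_of (W n) (W (n + 1)) hα hle hoW hlc) hs
    · obtain ⟨hβ, hsub, hiW, hlc⟩ := hA hc
      refine ⟨hsub, L.quotLE_of_βEq _ _ hβ, fun hle => ?_, fun _ => hβ⟩
      exact absurd (L.closed_of (W n) (W (n + 1)) hβ hle hiW hlc) hc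
  refine ⟨main, ?_⟩
  rintro ⟨k, repα, hrepα⟩ ⟨m, repβ, hrepβ⟩
  by_contra hstab
  push_neg at hstab
  have chainS : ∀ a b : ℕ, a ≤ b → L.subLE (W a).α (W b).α := by
    intro a b hab
    induction b, hab using Nat.le_induction with
    | base => exact L.subLE_refl' _
    | succ b hb ih => exact L.subLE_trans' ih (main b).1
  have chainQ : ∀ a b : ℕ, a ≤ b → L.quotLE (W b).β (W a).β := by
    intro a b hab
    induction b, hab using Nat.le_induction with
    | base => exact L.quotLE_refl' _
    | succ b hb ih => exact L.quotLE_trans' (main b).2.1 ih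
  choose cA hA1 hA2 using fun n => hrepα _ (L.FS.mo (W n).α) (L.FS.hmo _)
  choose cB hB1 hB2 using fun n => hrepβ _ (L.FS.ep (W n).β) (L.FS.hep _)
  have key : ∀ a b : ℕ, a < b → cA a = cA b → cB a = cB b → False := by
    intro a b hab hcA hcB
    have hsa : L.subLE (W b).α (W a).α := by
      refine L.subLE_of_mo (L.subLE_trans' (hA1 b) ?_)
      rw [← hcA]; exact hA2 a
    have hqa : L.quotLE (W a).β (W b).β := by
      refine L.quotLE_of_ep (L.quotLE_trans' (hB1 a) ?_)
      rw [hcB]; exact hB2 b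
    have hm1 : L.subLE (W (a + 1)).α (W a).α :=
      L.subLE_trans' (chainS (a + 1) b hab) hsa
    have hm2 : L.quotLE (W a).β (W (a + 1)).β :=
      L.quotLE_trans' hqa (chainQ (a + 1) b hab)
    exact hstab a
      (L.wrapper_eq _ _ ((main a).2.2.1 hm1) ((main a).2.2.2 hm2))
  obtain ⟨a, b, hne, heqc⟩ :=
    Finite.exists_ne_map_eq_of_infinite (fun n : ℕ => (cA n, cB n))
  have h1 : cA a = cA b := congrArg Prod.fst heqc
  have h2 : cB a = cB b := congrArg Prod.snd heqc
  rcases lt_or_gt_of_ne hne with h | h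
  · exact key a b h h1 h2
  · exact key b a h h1.symm h2.symm
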